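/- Let α > 0 and β > 0. Then for every w with 0 < w < 1/β: 1/w + α² w + β² w/(1 − β² w²) > 2 √(α² + β²). -/
import Mathlib

/-- Let `α, β > 0`. Then for every `w` with `0 < w < 1/β`:
`1/w + α²w + β²w/(1 − β²w²) > 2√(α² + β²)`. -/
theorem stmt18 (α β : ℝ) (hα : 0 < α) (hβ : 0 < β) :
    ∀ w : ℝ, 0 < w → w < 1 / β →
      2 * Real.sqrt (α ^ 2 + β ^ 2) <
        1 / w + α ^ 2 * w + β ^ 2 * w / (1 - β ^ 2 * w ^ 2) := by
  intro w hw hw1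
  have hbw : β * w < 1 := by
    rw [lt_div_iff₀ hβ] at hw1; linarith [hw1]
  have h1 : 0 < 1 - β ^ 2 * w ^ 2 := by nlinarith [mul_pos hβ hw, mul_pos (mul_pos hβ hw) (mul_pos hβ hw)]
  have h2 : β ^ 2 * w < β ^ 2 * w / (1 - β ^ 2 * w ^ 2) := by
    rw [lt_div_iff₀ h1]; nlinarith [mul_pos (mul_pos (mul_pos (mul_pos hβ hβ) hβ) hβ) (mul_pos hw (mul_pos hw hw))]
  have hs : Real.sqrt (α ^ 2 + β ^ 2) ^ 2 = α ^ 2 + β ^ 2 :=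
    Real.sq_sqrt (by positivity)
  have hAM : 2 * Real.sqrt (α ^ 2 + β ^ 2) ≤ 1 / w + (α ^ 2 + β ^ 2) * w := by
    rw [div_add' _ _ _ (ne_of_gt hw), le_div_iff₀ hw]
    nlinarith [sq_nonneg (Real.sqrt (α ^ 2 + β ^ 2) * w - 1)]
  linarith
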